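/- Define a morphism F : G → H in the category Grpd of (small) groupoids to be a weak equivalence if it is fully faithful and essentially surjective, a fibration if for each object x in G and each morphism h : F(x) → y in H there exists a morphism g : x → x' in G with F(g) = h (isofibration), and a cofibration if it is injective on objects. Then Grpd with these three classes of morphisms is a model category. -/

import Mathlib

/-!
STATEMENT 0: The category `Grpd` of small groupoids, with weak equivalences the
fully faithful and essentially surjective functors, fibrations the isofibrations,
and cofibrations the functors injective on objects, is a model category.
-/

open CategoryTheory

universe u

namespace Stmt0

/-- Weak equivalences in `Grpd`: fully faithful and essentially surjective functors. -/
def weakEquiv : MorphismProperty Grpd.{u, u} :=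
  fun _ _ F => Functor.Full F ∧ Functor.Faithful F ∧ Functor.EssSurj F

/-- Fibrations in `Grpd` (isofibrations): for each object `x` of the source and each
morphism `h : F(x) ⟶ y` in the target, there is a morphism `g : x ⟶ x'` with `F(g) = h`. -/
def fibration : MorphismProperty Grpd.{u, u} :=
  fun G H F => ∀ (x : G) (y : H) (h : F.obj x ⟶ y),
    ∃ (x' : G) (g : x ⟶ x') (e : F.obj x' = y), F.map g ≫ eqToHom e = h

/-- Cofibrations in `Grpd`: functors injective on objects. -/
def cofibration : MorphismProperty Grpd.{u, u} :=
  fun _ _ F => Function.Injective F.obj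

/-- `f` is a retract of `f'` in the arrow category. -/
def IsRetract {C : Type*} [Category C] {X Y X' Y' : C} (f : X ⟶ Y) (f' : X' ⟶ Y') : Prop :=
  ∃ (i : X ⟶ X') (r : X' ⟶ X) (j : Y ⟶ Y') (s : Y' ⟶ Y),
    i ≫ r = 𝟙 X ∧ j ≫ s = 𝟙 Y ∧ i ≫ f' = f ≫ j ∧ f' ≫ s = r ≫ f

/-- The axioms of a model category for a triple of classes of morphisms
(weak equivalences `W`, fibrations `Fib`, cofibrations `Cof`). -/
structure IsModelCategory (C : Type*) [Category C]
    (W Fib Cof : MorphismProperty C) : Prop where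
  /-- completeness -/
  hasLimits : Limits.HasLimits C
  /-- cocompleteness -/
  hasColimits : Limits.HasColimits C
  /-- two-out-of-three -/
  weq_comp : ∀ ⦃X Y Z : C⦄ (f : X ⟶ Y) (g : Y ⟶ Z), W f → W g → W (f ≫ g)
  weq_of_precomp : ∀ ⦃X Y Z : C⦄ (f : X ⟶ Y) (g : Y ⟶ Z), W f → W (f ≫ g) → W g
  weq_of_postcomp : ∀ ⦃X Y Z : C⦄ (f : X ⟶ Y) (g : Y ⟶ Z), W g → W (f ≫ g) → W f
  /-- closure under retracts -/
  weq_retract : ∀ ⦃X Y X' Y' : C⦄ (f : X ⟶ Y) (f' : X' ⟶ Y'),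
    IsRetract f f' → W f' → W f
  fib_retract : ∀ ⦃X Y X' Y' : C⦄ (f : X ⟶ Y) (f' : X' ⟶ Y'),
    IsRetract f f' → Fib f' → Fib f
  cof_retract : ∀ ⦃X Y X' Y' : C⦄ (f : X ⟶ Y) (f' : X' ⟶ Y'),
    IsRetract f f' → Cof f' → Cof f
  /-- lifting axioms -/
  lift_cof_trivFib : ∀ ⦃A B X Y : C⦄ (i : A ⟶ B) (p : X ⟶ Y),
    Cof i → Fib p → W p → HasLiftingProperty i p
  lift_trivCof_fib : ∀ ⦃A B X Y : C⦄ (i : A ⟶ B) (p : X ⟶ Y),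
    Cof i → W i → Fib p → HasLiftingProperty i p
  /-- factorization axioms -/
  fact_cof_trivFib : ∀ ⦃X Y : C⦄ (f : X ⟶ Y),
    ∃ (Z : C) (i : X ⟶ Z) (p : Z ⟶ Y), Cof i ∧ Fib p ∧ W p ∧ i ≫ p = f
  fact_trivCof_fib : ∀ ⦃X Y : C⦄ (f : X ⟶ Y),
    ∃ (Z : C) (i : X ⟶ Z) (p : Z ⟶ Y), Cof i ∧ W i ∧ Fib p ∧ i ≫ p = f

open CategoryTheory.Limits

@[simp] lemma comp_obj' {X Y Z : Grpd.{u,u}} (f : X ⟶ Y) (g : Y ⟶ Z) (x : ↑X) :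
    (f ≫ g).obj x = g.obj (f.obj x) := rfl

@[simp] lemma comp_map' {X Y Z : Grpd.{u,u}} (f : X ⟶ Y) (g : Y ⟶ Z) {a b : ↑X} (u : a ⟶ b) :
    (f ≫ g).map u = g.map (f.map u) := rfl

@[simp] lemma id_obj' {X : Grpd.{u,u}} (x : ↑X) : (𝟙 X : X ⟶ X).obj x = x := rfl

@[simp] lemma id_map' {X : Grpd.{u,u}} {a b : ↑X} (u : a ⟶ b) : (𝟙 X : X ⟶ X).map u = u := rfl

theorem weakEquiv_iff {G H : Grpd.{u,u}} (F : G ⟶ H) :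
    weakEquiv F ↔ Functor.IsEquivalence F :=
  ⟨fun ⟨h1, h2, h3⟩ => ⟨h2, h1, h3⟩, fun h => ⟨h.full, h.faithful, h.essSurj⟩⟩

theorem weq_comp' : ∀ ⦃X Y Z : Grpd.{u,u}⦄ (f : X ⟶ Y) (g : Y ⟶ Z),
    weakEquiv f → weakEquiv g → weakEquiv (f ≫ g) := by
  intro X Y Z f g hf hg
  rw [weakEquiv_iff] at *
  haveI := hf; haveI := hg
  exact Functor.isEquivalence_trans f g

theorem weq_of_precomp' : ∀ ⦃X Y Z : Grpd.{u,u}⦄ (f : X ⟶ Y) (g : Y ⟶ Z),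
    weakEquiv f → weakEquiv (f ≫ g) → weakEquiv g := by
  intro X Y Z f g hf hfg
  rw [weakEquiv_iff] at *
  haveI := hf; haveI : Functor.IsEquivalence (f ⋙ g) := hfg
  exact Functor.isEquivalence_of_comp_left f g

theorem weq_of_postcomp' : ∀ ⦃X Y Z : Grpd.{u,u}⦄ (f : X ⟶ Y) (g : Y ⟶ Z),
    weakEquiv g → weakEquiv (f ≫ g) → weakEquiv f := by
  intro X Y Z f g hg hfg
  rw [weakEquiv_iff] at *
  haveI := hg; haveI : Functor.IsEquivalence (f ⋙ g) := hfg
  exact Functor.isEquivalence_of_comp_right f g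

theorem cof_retract' : ∀ ⦃X Y X' Y' : Grpd.{u,u}⦄ (f : X ⟶ Y) (f' : X' ⟶ Y'),
    IsRetract f f' → cofibration f' → cofibration f := by
  rintro X Y X' Y' f f' ⟨i, r, j, s, hir, hjs, hsq1, hsq2⟩ hc a a' h
  have h1 : f'.obj (i.obj a) = f'.obj (i.obj a') := by
    have e1 := Functor.congr_obj hsq1 a
    have e2 := Functor.congr_obj hsq1 a'
    show (i ≫ f').obj a = (i ≫ f').obj a'
    rw [e1, e2]; exact congrArg j.obj h
  have h2 := hc h1
  have e1 := Functor.congr_obj hir a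
  have e2 := Functor.congr_obj hir a'
  show a = a'
  calc a = (i ≫ r).obj a := e1.symm
    _ = (i ≫ r).obj a' := congrArg r.obj h2
    _ = a' := e2

theorem weq_retract' : ∀ ⦃X Y X' Y' : Grpd.{u,u}⦄ (f : X ⟶ Y) (f' : X' ⟶ Y'),
    IsRetract f f' → weakEquiv f' → weakEquiv f := by
  rintro X Y X' Y' f f' ⟨i, r, j, s, hir, hjs, hsq1, hsq2⟩ ⟨hfull, hfaith, hsurj⟩
  refine ⟨?_, ?_, ?_⟩
  · -- Full
    constructor
    intro a b u
    have hju : (j.map u : j.obj (f.obj a) ⟶ j.obj (f.obj b)) = j.map u := rfl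
    -- transport j.map u to f'.obj (i.obj a) ⟶ f'.obj (i.obj b)
    have ea : f'.obj (i.obj a) = j.obj (f.obj a) := Functor.congr_obj hsq1 a
    have eb : f'.obj (i.obj b) = j.obj (f.obj b) := Functor.congr_obj hsq1 b
    obtain ⟨w, hw⟩ := hfull.map_surjective (eqToHom ea ≫ j.map u ≫ eqToHom eb.symm)
    refine ⟨eqToHom (Functor.congr_obj hir a).symm ≫ r.map w ≫ eqToHom (Functor.congr_obj hir b), ?_⟩
    have hr : f.map (r.map w) = eqToHom (Functor.congr_obj hsq2 (i.obj a)).symm ≫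
        s.map (f'.map w) ≫ eqToHom (Functor.congr_obj hsq2 (i.obj b)) := by
      have := Functor.congr_hom hsq2.symm w
      simpa using this
    rw [Functor.map_comp, Functor.map_comp, hr, hw]
    have h3 : s.map (j.map u) = eqToHom (Functor.congr_obj hjs (f.obj a)) ≫ u ≫
        eqToHom (Functor.congr_obj hjs (f.obj b)).symm := by
      have := Functor.congr_hom hjs u
      simpa using this
    simp [eqToHom_map, h3]
  · -- Faithful
    constructor
    intro a b u v huv
    have h1 : f'.map (i.map u) = f'.map (i.map v) := by
      have hu := Functor.congr_hom hsq1 u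
      have hv := Functor.congr_hom hsq1 v
      show (i ≫ f').map u = (i ≫ f').map v
      rw [hu, hv]
      simp only [comp_map', huv]
    have h2 := hfaith.map_injective h1
    have hu := Functor.congr_hom hir u
    have hv := Functor.congr_hom hir v
    have : (i ≫ r).map u = (i ≫ r).map v := by
      show r.map (i.map u) = r.map (i.map v); rw [h2]
    rw [hu, hv] at this
    simp only [id_map'] at this
    rw [← cancel_epi (eqToHom (Functor.congr_obj hir a)),
      ← cancel_mono (eqToHom (Functor.congr_obj hir b).symm)]
    simpa using this
  · -- EssSurj
    constructor
    intro y
    obtain ⟨x', ⟨e⟩⟩ := hsurj.mem_essImage (j.obj y)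
    refine ⟨r.obj x', ⟨?_⟩⟩
    have e1 : f.obj (r.obj x') = s.obj (f'.obj x') := (Functor.congr_obj hsq2 x').symm
    have e2 : s.obj (j.obj y) = y := Functor.congr_obj hjs y
    exact eqToIso e1 ≪≫ s.mapIso e ≪≫ eqToIso e2


theorem fib_retract' : ∀ ⦃X Y X' Y' : Grpd.{u,u}⦄ (f : X ⟶ Y) (f' : X' ⟶ Y'),
    IsRetract f f' → fibration f' → fibration f := by
  rintro X Y X' Y' f f' ⟨i, r, j, s, hir, hjs, hsq1, hsq2⟩ hfib x y h
  have hx : f'.obj (i.obj x) = j.obj (f.obj x) := Functor.congr_obj hsq1 x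
  obtain ⟨x'', g, e, hcomp⟩ := hfib (i.obj x) (j.obj y) (eqToHom hx ≫ j.map h)
  refine ⟨r.obj x'', eqToHom (Functor.congr_obj hir x).symm ≫ r.map g, ?_, ?_⟩
  · calc f.obj (r.obj x'') = s.obj (f'.obj x'') := (Functor.congr_obj hsq2 x'').symm
      _ = s.obj (j.obj y) := congrArg s.obj e
      _ = y := Functor.congr_obj hjs y
  · have hg : f'.map g = eqToHom hx ≫ j.map h ≫ eqToHom e.symm := by
      rw [← Category.assoc, ← hcomp]; simp
    have h1 : f.map (r.map g) = eqToHom (Functor.congr_obj hsq2 (i.obj x)).symm ≫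
        s.map (f'.map g) ≫ eqToHom (Functor.congr_obj hsq2 x'') := by
      have := Functor.congr_hom hsq2.symm g
      simpa using this
    have h2 : s.map (j.map h) = eqToHom (Functor.congr_obj hjs (f.obj x)) ≫ h ≫
        eqToHom (Functor.congr_obj hjs y).symm := by
      have := Functor.congr_hom hjs h
      simpa using this
    simp [h1, hg, eqToHom_map, h2]

/-- Mapping cylinder object for factorization cof + trivial fib. -/
def cylProj {G H : Grpd.{u,u}} (F : G ⟶ H) : (Sum G H) → H.α :=
  fun z => Sum.elim F.obj id z

def Cyl {G H : Grpd.{u,u}} (F : G ⟶ H) : Grpd.{u,u} :=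
  Grpd.of (InducedCategory H.α (cylProj F))

def cylIncl {G H : Grpd.{u,u}} (F : G ⟶ H) : G ⟶ Cyl F where
  obj x := Sum.inl x
  map {a b} g := InducedCategory.homMk (F.map g : (cylProj F (Sum.inl a)) ⟶ _)
  map_id x := InducedCategory.hom_ext (F.map_id x)
  map_comp g h := InducedCategory.hom_ext (F.map_comp g h)

def cylProjF {G H : Grpd.{u,u}} (F : G ⟶ H) : Cyl F ⟶ H :=
  (inducedFunctor (cylProj F) : InducedCategory H.α (cylProj F) ⥤ H.α)

theorem fact_cof_trivFib' : ∀ ⦃X Y : Grpd.{u,u}⦄ (f : X ⟶ Y),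
    ∃ (Z : Grpd.{u,u}) (i : X ⟶ Z) (p : Z ⟶ Y),
      cofibration i ∧ fibration p ∧ weakEquiv p ∧ i ≫ p = f := by
  intro G H F
  refine ⟨Cyl F, cylIncl F, cylProjF F, ?_, ?_, ⟨?_, ?_, ?_⟩, ?_⟩
  · intro a b hab
    exact Sum.inl_injective hab
  · intro z y h
    refine ⟨Sum.inr y, InducedCategory.homMk h, rfl, ?_⟩
    show h ≫ eqToHom rfl = h
    simp
  · exact InducedCategory.full _
  · exact InducedCategory.faithful _
  · exact ⟨fun y => ⟨Sum.inr y, ⟨Iso.refl y⟩⟩⟩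
  · rfl

/-- Path object (iso-comma) for factorization trivial cof + fib. -/
structure PathOb {G H : Grpd.{u,u}} (F : G ⟶ H) : Type u where
  x : G
  y : H
  e : F.obj x ≅ y

instance pathObGroupoid {G H : Grpd.{u,u}} (F : G ⟶ H) : Groupoid (PathOb F) where
  Hom a b := a.x ⟶ b.x
  id a := 𝟙 a.x
  comp g h := g ≫ h
  inv g := Groupoid.inv g
  inv_comp g := Groupoid.inv_comp g
  comp_inv g := Groupoid.comp_inv g

def PathObj {G H : Grpd.{u,u}} (F : G ⟶ H) : Grpd.{u,u} := Grpd.of (PathOb F)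

def pathIncl {G H : Grpd.{u,u}} (F : G ⟶ H) : G ⟶ PathObj F where
  obj x := ⟨x, F.obj x, Iso.refl _⟩
  map g := g

def pathProj {G H : Grpd.{u,u}} (F : G ⟶ H) : PathObj F ⟶ H where
  obj a := a.y
  map {a b} g := a.e.inv ≫ F.map g ≫ b.e.hom
  map_id a := by
    show a.e.inv ≫ F.map (𝟙 a.x) ≫ a.e.hom = 𝟙 a.y
    simp
  map_comp {a b c} g h := by
    show a.e.inv ≫ F.map ((g : a.x ⟶ b.x) ≫ (h : b.x ⟶ c.x)) ≫ c.e.hom =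
      (a.e.inv ≫ F.map g ≫ b.e.hom) ≫ b.e.inv ≫ F.map h ≫ c.e.hom
    simp
    erw [F.map_comp]
    simp

theorem fact_trivCof_fib' : ∀ ⦃X Y : Grpd.{u,u}⦄ (f : X ⟶ Y),
    ∃ (Z : Grpd.{u,u}) (i : X ⟶ Z) (p : Z ⟶ Y),
      cofibration i ∧ weakEquiv i ∧ fibration p ∧ i ≫ p = f := by
  intro G H F
  refine ⟨PathObj F, pathIncl F, pathProj F, ?_, ⟨?_, ?_, ?_⟩, ?_, ?_⟩
  · intro a b hab
    exact congrArg PathOb.x hab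
  · exact ⟨fun {a b} g => ⟨g, rfl⟩⟩
  · exact ⟨fun {a b} g h hgh => hgh⟩
  · refine ⟨fun a => ⟨a.x, ⟨?_⟩⟩⟩
    exact { hom := (𝟙 a.x : ((pathIncl F).obj a.x).x ⟶ a.x)
            inv := (𝟙 a.x : a.x ⟶ ((pathIncl F).obj a.x).x)
            hom_inv_id := Category.comp_id _
            inv_hom_id := Category.comp_id _ }
  · intro a y h
    refine ⟨⟨a.x, y, a.e ≪≫ ⟨h, Groupoid.inv h, Groupoid.comp_inv h, Groupoid.inv_comp h⟩⟩,
      𝟙 a.x, rfl, ?_⟩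
    show (a.e.inv ≫ F.map (𝟙 a.x) ≫ (a.e.hom ≫ h)) ≫ eqToHom rfl = h
    simp only [eqToHom_refl, Category.comp_id]
    erw [CategoryTheory.Functor.map_id, Category.id_comp, Iso.inv_hom_id_assoc]
  · refine CategoryTheory.Functor.ext (fun x => rfl) (fun a b g => ?_)
    show (Iso.refl (F.obj a)).inv ≫ F.map g ≫ (Iso.refl (F.obj b)).hom =
      eqToHom rfl ≫ F.map g ≫ eqToHom rfl
    simp


theorem lift_cof_trivFib' : ∀ ⦃A B X Y : Grpd.{u,u}⦄ (i : A ⟶ B) (p : X ⟶ Y),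
    cofibration i → fibration p → weakEquiv p → HasLiftingProperty i p := by
  rintro A B X Y i p hcof hfib ⟨hpfull, hpfaith, hpsurj⟩
  haveI := hpfull; haveI := hpfaith; haveI := hpsurj
  constructor
  intro f g sq
  classical
  have hsurj : ∀ y : ↑Y, ∃ x : ↑X, p.obj x = y := by
    intro y
    obtain ⟨x₀, ⟨e⟩⟩ := hpsurj.mem_essImage y
    obtain ⟨x', g', e', _⟩ := hfib x₀ y e.hom
    exact ⟨x', e'⟩
  let χ : ↑B → ↑X := fun b =>
    if h : ∃ a, i.obj a = b then f.obj h.choose else (hsurj (g.obj b)).choose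
  have hχ : ∀ b, p.obj (χ b) = g.obj b := by
    intro b
    by_cases h : ∃ a, i.obj a = b
    · simp only [χ, dif_pos h]
      have h1 : p.obj (f.obj h.choose) = g.obj (i.obj h.choose) := Functor.congr_obj sq.w h.choose
      rw [h1, h.choose_spec]
    · simp only [χ, dif_neg h]
      exact (hsurj (g.obj b)).choose_spec
  have hχa : ∀ a, χ (i.obj a) = f.obj a := by
    intro a
    have h : ∃ a', i.obj a' = i.obj a := ⟨a, rfl⟩
    simp only [χ, dif_pos h]
    exact congrArg f.obj (hcof h.choose_spec)
  let l : ↑B ⥤ ↑X :=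
    { obj := χ
      map := fun {b b'} β => p.preimage (eqToHom (hχ b) ≫ g.map β ≫ eqToHom (hχ b').symm)
      map_id := fun b => p.map_injective (by simp)
      map_comp := fun β β' => p.map_injective (by simp) }
  refine ⟨⟨⟨(l : B ⟶ X), ?_, ?_⟩⟩⟩
  · refine CategoryTheory.Functor.ext (fun a => hχa a) (fun a a' α => ?_)
    apply p.map_injective
    have hw : p.map (f.map α) = eqToHom (Functor.congr_obj sq.w a) ≫ g.map (i.map α) ≫
        eqToHom (Functor.congr_obj sq.w a').symm := by
      have := Functor.congr_hom sq.w α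
      simpa using this
    show p.map (l.map (i.map α)) = _
    simp [l, hw, eqToHom_map]
  · refine CategoryTheory.Functor.ext (fun b => hχ b) (fun b b' β => ?_)
    show p.map (l.map β) = _
    simp [l]


@[simp] lemma ginv_eqToHom {C : Type*} [Groupoid C] {a b : C} (h : a = b) :
    Groupoid.inv (eqToHom h) = eqToHom h.symm := by
  subst h; simp [Groupoid.inv_eq_inv]

lemma map_ginv {C D : Type*} [Groupoid C] [Groupoid D] (F : C ⥤ D) {a b : C} (u : a ⟶ b) :
    F.map (Groupoid.inv u) = Groupoid.inv (F.map u) := by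
  simp [Groupoid.inv_eq_inv]

theorem lift_trivCof_fib' : ∀ ⦃A B X Y : Grpd.{u,u}⦄ (i : A ⟶ B) (p : X ⟶ Y),
    cofibration i → weakEquiv i → fibration p → HasLiftingProperty i p := by
  rintro A B X Y i p hcof ⟨hifull, hifaith, hisurj⟩ hfib
  haveI := hifull; haveI := hifaith; haveI := hisurj
  constructor
  intro f g sq
  classical
  have hw_obj : ∀ x : ↑A, p.obj (f.obj x) = g.obj (i.obj x) := fun x => Functor.congr_obj sq.w x
  have hw_map : ∀ {x x' : ↑A} (u : x ⟶ x'), p.map (f.map u) =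
      eqToHom (hw_obj x) ≫ g.map (i.map u) ≫ eqToHom (hw_obj x').symm := by
    intro x x' u
    have := Functor.congr_hom sq.w u
    simpa using this
  -- combined choice: retraction-up-to-iso data and fibration correction data
  let D : ∀ b : ↑B, Σ' (a : ↑A) (e : i.obj a ≅ b) (x : ↑X) (k : f.obj a ⟶ x)
      (e' : p.obj x = g.obj b), p.map k ≫ eqToHom e' = eqToHom (hw_obj a) ≫ g.map e.hom :=
    fun b =>
    if h : ∃ a, i.obj a = b then
      ⟨h.choose, eqToIso h.choose_spec, f.obj h.choose, 𝟙 _,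
        (hw_obj h.choose).trans (congrArg g.obj h.choose_spec), by simp [eqToHom_map]⟩
    else
      let e := i.objObjPreimageIso b
      let H := hfib (f.obj (i.objPreimage b)) (g.obj b) (eqToHom (hw_obj _) ≫ g.map e.hom)
      ⟨i.objPreimage b, e, H.choose, H.choose_spec.choose, H.choose_spec.choose_spec.choose,
        H.choose_spec.choose_spec.choose_spec⟩
  let ρ : ↑B → ↑A := fun b => (D b).1
  let η : ∀ b, i.obj (ρ b) ≅ b := fun b => (D b).2.1
  let σ : ↑B → ↑X := fun b => (D b).2.2.1
  let κ : ∀ b, f.obj (ρ b) ⟶ σ b := fun b => (D b).2.2.2.1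
  let ε : ∀ b, p.obj (σ b) = g.obj b := fun b => (D b).2.2.2.2.1
  have hcond : ∀ b, p.map (κ b) ≫ eqToHom (ε b) = eqToHom (hw_obj (ρ b)) ≫ g.map (η b).hom :=
    fun b => (D b).2.2.2.2.2
  -- behaviour on the image of i
  have key : ∀ (a c : ↑A) (spec : i.obj c = i.obj a) (_ : c = a),
      (⟨c, eqToIso spec, f.obj c, 𝟙 (f.obj c), (hw_obj c).trans (congrArg g.obj spec),
          by simp [eqToHom_map]⟩ :
        Σ' (a' : ↑A) (e : i.obj a' ≅ i.obj a) (x : ↑X) (k : f.obj a' ⟶ x)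
          (e' : p.obj x = g.obj (i.obj a)),
            p.map k ≫ eqToHom e' = eqToHom (hw_obj a') ≫ g.map e.hom) =
      ⟨a, eqToIso rfl, f.obj a, 𝟙 (f.obj a), hw_obj a, by simp [eqToHom_map]⟩ := by
    intro a c spec hc
    subst hc
    rfl
  have hDa : ∀ a : ↑A, D (i.obj a) = ⟨a, eqToIso rfl, f.obj a, 𝟙 (f.obj a), hw_obj a,
      by simp [eqToHom_map]⟩ := by
    intro a
    have h : ∃ a', i.obj a' = i.obj a := ⟨a, rfl⟩
    simp only [D]
    rw [dif_pos h]
    exact key a h.choose h.choose_spec (hcof h.choose_spec)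
  have hρ : ∀ a, ρ (i.obj a) = a := by
    intro a; simp only [ρ]; rw [hDa a]
  have hσ : ∀ a, σ (i.obj a) = f.obj a := by
    intro a; simp only [σ]; rw [hDa a]
  have hη : ∀ (a : ↑A) (w : i.obj (ρ (i.obj a)) = i.obj a), (η (i.obj a)).hom = eqToHom w := by
    intro a
    simp only [η, ρ]
    rw [hDa a]
    intro w; simp
  have hη' : ∀ (a : ↑A) (w : i.obj a = i.obj (ρ (i.obj a))), (η (i.obj a)).inv = eqToHom w := by
    intro a w
    apply Iso.inv_ext
    rw [hη a w.symm]; simp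
  have hκ : ∀ (a : ↑A) (w : f.obj (ρ (i.obj a)) = σ (i.obj a)), κ (i.obj a) = eqToHom w := by
    intro a
    simp only [κ, ρ, σ]
    rw [hDa a]
    intro w; simp
  -- the retraction functor
  let R : ↑B ⥤ ↑A :=
    { obj := ρ
      map := fun {b b'} β => i.preimage ((η b).hom ≫ β ≫ (η b').inv)
      map_id := fun b => i.map_injective (by simp)
      map_comp := fun β β' => i.map_injective (by simp) }
  have hiR : ∀ {b b'} (β : b ⟶ b'), i.map (R.map β) = (η b).hom ≫ β ≫ (η b').inv :=
    fun β => i.map_preimage _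
  have hRi : ∀ {a a'} (α : a ⟶ a'), R.map (i.map α) =
      eqToHom (hρ a) ≫ α ≫ eqToHom (hρ a').symm := by
    intro a a' α
    apply i.map_injective
    rw [hiR, hη a (congrArg i.obj (hρ a)), hη' a' (congrArg i.obj (hρ a')).symm]
    simp [eqToHom_map]
  -- the lift
  let l : ↑B ⥤ ↑X :=
    { obj := σ
      map := fun {b b'} β => Groupoid.inv (κ b) ≫ f.map (R.map β) ≫ κ b'
      map_id := fun b => by simp [Groupoid.inv_eq_inv]; erw [CategoryTheory.Functor.map_id, Category.id_comp]
      map_comp := fun {b b' b''} β β' => by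
        show Groupoid.inv (κ b) ≫ f.map (R.map (β ≫ β')) ≫ κ b'' =
          (Groupoid.inv (κ b) ≫ f.map (R.map β) ≫ κ b') ≫
            Groupoid.inv (κ b') ≫ f.map (R.map β') ≫ κ b''
        rw [Functor.map_comp R]
        simp [Groupoid.inv_eq_inv] }
  refine ⟨⟨⟨(l : B ⟶ X), ?_, ?_⟩⟩⟩
  · refine CategoryTheory.Functor.ext (fun a => hσ a) (fun a a' α => ?_)
    show Groupoid.inv (κ (i.obj a)) ≫ f.map (R.map (i.map α)) ≫ κ (i.obj a') = _
    rw [hRi, hκ a ((congrArg f.obj (hρ a)).trans (hσ a).symm),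
      hκ a' ((congrArg f.obj (hρ a')).trans (hσ a').symm)]
    simp [eqToHom_map]
  · refine CategoryTheory.Functor.ext (fun b => ε b) (fun b b' β => ?_)
    show p.map (Groupoid.inv (κ b) ≫ f.map (R.map β) ≫ κ b') = _
    have hpk : ∀ b, p.map (κ b) =
        eqToHom (hw_obj (ρ b)) ≫ g.map (η b).hom ≫ eqToHom (ε b).symm := by
      intro b
      rw [← Category.assoc, ← hcond b]; simp
    rw [Functor.map_comp, Functor.map_comp, map_ginv, hpk, hpk, hw_map, hiR]
    simp [Groupoid.inv_eq_inv]

lemma conj_ginv {C D : Type*} [Groupoid C] [Groupoid D] (G : C ⥤ D) {a b : C} {a' b' : D}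
    (e1 : a' = G.obj a) (e2 : b' = G.obj b) (u : a ⟶ b) :
    eqToHom e2 ≫ G.map (Groupoid.inv u) ≫ eqToHom e1.symm =
      Groupoid.inv (eqToHom e1 ≫ G.map u ≫ eqToHom e2.symm) := by
  subst e1; subst e2; simp [Groupoid.inv_eq_inv]

section Lims

variable {J : Type u} [SmallCategory J]

instance groupoidObjects {F : J ⥤ Grpd.{u,u}} {j : J} :
    Groupoid (((F ⋙ Grpd.forgetToCat) ⋙ Cat.objects).obj j) :=
  (F.obj j).str

instance groupoidObjects' {F : J ⥤ Grpd.{u,u}} {j : J} :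
    Groupoid ↑((F ⋙ Grpd.forgetToCat).obj j) :=
  (F.obj j).str

instance groupoidForgetObj {G : Grpd.{u,u}} : Groupoid ↑(Grpd.forgetToCat.obj G) := G.str

/-- The limit category of groupoids is a groupoid. -/
noncomputable instance limGroupoid (F : J ⥤ Grpd.{u,u}) :
    Groupoid (limit ((F ⋙ Grpd.forgetToCat) ⋙ Cat.objects.{u,u})) :=
  { (inferInstance : Category (limit ((F ⋙ Grpd.forgetToCat) ⋙ Cat.objects.{u,u}))) with
    inv := fun {X Y} f =>
      Types.Limit.mk.{u,u} (Cat.HasLimits.homDiagram Y X)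
        (fun j => Groupoid.inv (limit.π (Cat.HasLimits.homDiagram X Y) j f))
        (by
          intro j j' h
          have hf := limit.w_apply (Cat.HasLimits.homDiagram X Y) h f
          rw [← hf]
          exact conj_ginv _ _ _ _)
    inv_comp := fun {X Y} f => by
      apply Types.limit_ext.{u,u}
      intro j
      erw [Types.Limit.π_mk, Types.Limit.π_mk, Types.Limit.π_mk]
      exact Groupoid.inv_comp _
    comp_inv := fun {X Y} f => by
      apply Types.limit_ext.{u,u}
      intro j
      erw [Types.Limit.π_mk, Types.Limit.π_mk, Types.Limit.π_mk]
      exact Groupoid.comp_inv _ }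

noncomputable instance createsLimitsForgetToCat {F : J ⥤ Grpd.{u,u}} :
    CreatesLimit F Grpd.forgetToCat.{u,u} :=
  createsLimitOfFullyFaithfulOfIso
    (Grpd.of (limit ((F ⋙ Grpd.forgetToCat) ⋙ Cat.objects.{u,u})))
    ((eqToIso rfl) ≪≫
      (limit.isoLimitCone ⟨Cat.HasLimits.limitCone (F ⋙ Grpd.forgetToCat),
        Cat.HasLimits.limitConeIsLimit _⟩).symm)

noncomputable instance : HasLimits Grpd.{u,u} where
  has_limits_of_shape _ :=
    { has_limit := fun F => hasLimit_of_created F Grpd.forgetToCat }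

end Lims

lemma prefunctor_ext' {V : Type*} [Quiver V] {W : Type*} [Category W] {P Q : V ⥤q W}
    (hobj : ∀ a, P.obj a = Q.obj a)
    (hmap : ∀ (a b : V) (e : a ⟶ b),
      P.map e = eqToHom (hobj a) ≫ Q.map e ≫ eqToHom (hobj b).symm) :
    P = Q := by
  obtain ⟨Pobj, Pmap⟩ := P
  obtain ⟨Qobj, Qmap⟩ := Q
  have hO : Pobj = Qobj := funext hobj
  subst hO
  simp only [Prefunctor.mk.injEq, heq_eq_eq, true_and]
  funext a b e
  simpa using hmap a b e

lemma prefunctor_congr_map {V : Type*} [Quiver V] {W : Type*} [Category W] {P Q : V ⥤q W}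
    (h : P = Q) {a b : V} (e : a ⟶ b) :
    P.map e = eqToHom (congrFun (congrArg Prefunctor.obj h) a) ≫ Q.map e ≫
      eqToHom (congrFun (congrArg Prefunctor.obj h) b).symm := by
  subst h; simp

lemma eqToHom_aux_id {C : Type*} [Category C] {P X Q : C} (p : P = X) (q : X = Q) (r : Q = P) :
    eqToHom p ≫ (𝟙 X ≫ eqToHom q) ≫ eqToHom r = 𝟙 P := by
  subst p q; simp

lemma eqToHom_aux_comp {C : Type*} [Category C] {P A B D Q R S T U : C} (u : A ⟶ B) (v : B ⟶ D)
    (p1 : P = A) (p2 : D = Q) (p3 : Q = R) (q1 : P = A) (q2 : B = S) (q3 : S = T) (q4 : T = B)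
    (q5 : D = U) (q6 : U = R) :
    eqToHom p1 ≫ ((u ≫ v) ≫ eqToHom p2) ≫ eqToHom p3 =
      (eqToHom q1 ≫ (u ≫ eqToHom q2) ≫ eqToHom q3) ≫ eqToHom q4 ≫ (v ≫ eqToHom q5) ≫ eqToHom q6 := by
  subst p1 p2 p3 q2 q3 q5; simp

lemma eqToHom_aux_nat {C : Type*} [Category C] {P Q K L R S T V W : C} (N : K ⟶ L)
    (p1 : P = Q) (p2 : Q = K) (p3 : L = R) (p4 : R = S) (p5 : S = T)
    (q1 : P = V) (q2 : V = K) (q3 : L = W) (q4 : W = T) :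
    eqToHom p1 ≫ ((eqToHom p2 ≫ N ≫ eqToHom p3) ≫ eqToHom p4) ≫ eqToHom p5 =
      eqToHom q1 ≫ eqToHom q2 ≫ (N ≫ eqToHom q3) ≫ eqToHom q4 := by
  subst p1 p2 p3 p4 p5 q2 q4; simp

lemma eqToHom_aux_fac {C : Type*} [Category C] {P Q K L R S : C} (M : K ⟶ L)
    (p : P = Q) (q : Q = K) (r : L = R) (t : R = S) (p' : P = K) (t' : L = S) :
    eqToHom p ≫ (eqToHom q ≫ M ≫ eqToHom r) ≫ eqToHom t = eqToHom p' ≫ M ≫ eqToHom t' := by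
  subst p q r t; simp

section Colims

variable {J : Type u} [SmallCategory J] (F : J ⥤ Grpd.{u,u})

/-- Relation identifying objects along the diagram. -/
def obRel : (Σ j : J, ↑(F.obj j)) → (Σ j : J, ↑(F.obj j)) → Prop :=
  fun p q => ∃ f : p.1 ⟶ q.1, (F.map f).obj p.2 = q.2

/-- Objects of the colimit groupoid. -/
def Ob := Quot (obRel F)

/-- The class of an object. -/
def vtx (j : J) (x : ↑(F.obj j)) : Ob F := Quot.mk _ ⟨j, x⟩

/-- Generating arrows for the colimit groupoid. -/
structure GenArrow (a b : Ob F) : Type u where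
  j : J
  x : ↑(F.obj j)
  y : ↑(F.obj j)
  f : x ⟶ y
  ha : vtx F j x = a
  hb : vtx F j y = b

@[reducible] instance : Quiver.{u} (Ob F) := ⟨fun (a b : Ob F) => GenArrow F a b⟩

/-- The relations imposed on the free groupoid on the generating arrows. -/
inductive colimRel : HomRel (Quiver.FreeGroupoid (Ob F)) where
  | id (j : J) (x : ↑(F.obj j)) (a : Ob F) (ha : vtx F j x = a) :
      colimRel ((Quiver.FreeGroupoid.of (Ob F)).map (⟨j, x, x, 𝟙 x, ha, ha⟩ : a ⟶ a))
        (𝟙 ((Quiver.FreeGroupoid.of (Ob F)).obj a))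
  | comp (j : J) (x y z : ↑(F.obj j)) (f : x ⟶ y) (g : y ⟶ z) (a b c : Ob F)
      (ha : vtx F j x = a) (hb : vtx F j y = b) (hc : vtx F j z = c) :
      colimRel ((Quiver.FreeGroupoid.of (Ob F)).map (⟨j, x, z, f ≫ g, ha, hc⟩ : a ⟶ c))
        ((Quiver.FreeGroupoid.of (Ob F)).map (⟨j, x, y, f, ha, hb⟩ : a ⟶ b) ≫
          (Quiver.FreeGroupoid.of (Ob F)).map (⟨j, y, z, g, hb, hc⟩ : b ⟶ c))
  | nat (j j' : J) (α : j ⟶ j') (x y : ↑(F.obj j)) (f : x ⟶ y) (a b : Ob F)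
      (ha : vtx F j x = a) (hb : vtx F j y = b)
      (ha' : vtx F j' ((F.map α).obj x) = a) (hb' : vtx F j' ((F.map α).obj y) = b) :
      colimRel ((Quiver.FreeGroupoid.of (Ob F)).map (⟨j, x, y, f, ha, hb⟩ : a ⟶ b))
        ((Quiver.FreeGroupoid.of (Ob F)).map
          (⟨j', (F.map α).obj x, (F.map α).obj y, (F.map α).map f, ha', hb'⟩ : a ⟶ b))

noncomputable instance colimQuotGroupoid :
    Groupoid (CategoryTheory.Quotient (colimRel F)) :=
  Groupoid.ofIsIso (fun {X Y} f => by
    refine Quotient.induction (r := colimRel F) (P := fun g => IsIso g) ?_ f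
    intro x y g
    infer_instance)

/-- The colimit groupoid. -/
noncomputable def ColimC : Grpd.{u,u} := Grpd.of (CategoryTheory.Quotient (colimRel F))

/-- Class of an object in the colimit groupoid. -/
noncomputable def vtxQ (a : Ob F) : ↑(ColimC F) :=
  (Quotient.functor (colimRel F)).obj ((Quiver.FreeGroupoid.of (Ob F)).obj a)

/-- Class of a generating arrow in the colimit groupoid. -/
noncomputable def genQ {a b : Ob F} (e : a ⟶ b) : vtxQ F a ⟶ vtxQ F b :=
  (Quotient.functor (colimRel F)).map ((Quiver.FreeGroupoid.of (Ob F)).map e)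

lemma genQ_conj {a b : Ob F} (j : J) (x y : ↑(F.obj j)) (f : x ⟶ y)
    (ha : vtx F j x = a) (hb : vtx F j y = b) :
    genQ F (⟨j, x, y, f, ha, hb⟩ : a ⟶ b) =
      eqToHom (congrArg (vtxQ F) ha).symm ≫ genQ F (⟨j, x, y, f, rfl, rfl⟩ : vtx F j x ⟶ vtx F j y) ≫
        eqToHom (congrArg (vtxQ F) hb) := by
  subst ha; subst hb; simp

/-- The colimit cocone legs. -/
noncomputable def leg (j : J) : F.obj j ⟶ ColimC F where
  obj x := vtxQ F (vtx F j x)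
  map {x y} f := genQ F (⟨j, x, y, f, rfl, rfl⟩ : vtx F j x ⟶ vtx F j y)
  map_id x := by
    have h := CategoryTheory.Quotient.sound (colimRel F) (colimRel.id j x (vtx F j x) rfl)
    show genQ F _ = _
    rw [genQ, h, CategoryTheory.Functor.map_id]
    rfl
  map_comp {x y z} f g := by
    have h := CategoryTheory.Quotient.sound (colimRel F)
      (colimRel.comp j x y z f g (vtx F j x) (vtx F j y) (vtx F j z) rfl rfl rfl)
    show genQ F _ = genQ F _ ≫ genQ F _
    rw [genQ, h, CategoryTheory.Functor.map_comp]
    rfl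

lemma vtx_nat {j j' : J} (α : j ⟶ j') (x : ↑(F.obj j)) :
    vtx F j x = vtx F j' ((F.map α).obj x) :=
  Quot.sound ⟨α, rfl⟩

lemma leg_nat {j j' : J} (α : j ⟶ j') : F.map α ≫ leg F j' = leg F j := by
  refine CategoryTheory.Functor.ext (fun x => ?_) (fun x y f => ?_)
  · exact (congrArg (vtxQ F) (vtx_nat F α x)).symm
  · show genQ F (⟨j', (F.map α).obj x, (F.map α).obj y, (F.map α).map f, rfl, rfl⟩ : vtx F j' ((F.map α).obj x) ⟶ vtx F j' ((F.map α).obj y)) = _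
    have h := CategoryTheory.Quotient.sound (colimRel F)
      (colimRel.nat j j' α x y f (vtx F j' ((F.map α).obj x)) (vtx F j' ((F.map α).obj y))
        (vtx_nat F α x) (vtx_nat F α y) rfl rfl)
    have h2 : genQ F (⟨j, x, y, f, vtx_nat F α x, vtx_nat F α y⟩ : vtx F j' ((F.map α).obj x) ⟶ vtx F j' ((F.map α).obj y)) =
        genQ F (⟨j', (F.map α).obj x, (F.map α).obj y, (F.map α).map f, rfl, rfl⟩ : vtx F j' ((F.map α).obj x) ⟶ vtx F j' ((F.map α).obj y)) := h
    rw [← h2, genQ_conj]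
    rfl

/-- The colimit cocone. -/
noncomputable def colimCocone : Cocone F where
  pt := ColimC F
  ι :=
    { app := leg F
      naturality := fun {j j'} α => by
        simp only [Functor.const_obj_map, Category.comp_id]
        exact leg_nat F α }

section Desc

variable (s : Cocone F)

/-- Descent on objects. -/
def vmap : Ob F → ↑s.pt :=
  Quot.lift (fun p => (s.ι.app p.1).obj p.2) (by
    rintro ⟨j, x⟩ ⟨j', y⟩ ⟨α, h⟩
    have hw := Functor.congr_obj (s.w α) x
    simp only [comp_obj'] at hw
    show (s.ι.app j).obj x = (s.ι.app j').obj y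
    rw [← hw, h])

/-- Descent as a prefunctor on the generating quiver. -/
def descPrefunctor : (Ob F) ⥤q ↑s.pt where
  obj := vmap F s
  map {a b} e := match e with
    | ⟨j, x, y, f, ha, hb⟩ =>
      eqToHom (congrArg (vmap F s) ha).symm ≫ (s.ι.app j).map f ≫ eqToHom (congrArg (vmap F s) hb)

/-- Descent on the free groupoid. -/
noncomputable def descFree : Quiver.FreeGroupoid (Ob F) ⥤ ↑s.pt :=
  Quiver.FreeGroupoid.lift (descPrefunctor F s)

lemma descFree_gen {a b : Ob F} (e : a ⟶ b) :
    (descFree F s).map ((Quiver.FreeGroupoid.of (Ob F)).map e) =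
      eqToHom (congrFun (congrArg Prefunctor.obj (Quiver.FreeGroupoid.lift_spec (descPrefunctor F s))) a) ≫
      (descPrefunctor F s).map e ≫
      eqToHom (congrFun (congrArg Prefunctor.obj (Quiver.FreeGroupoid.lift_spec (descPrefunctor F s))) b).symm := by
  exact prefunctor_congr_map (Quiver.FreeGroupoid.lift_spec (descPrefunctor F s)) e

lemma descFree_rel : ∀ (x y : Quiver.FreeGroupoid (Ob F)) (f₁ f₂ : x ⟶ y),
    colimRel F f₁ f₂ → (descFree F s).map f₁ = (descFree F s).map f₂ := by
  intro x y f₁ f₂ hrel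
  induction hrel with
  | id j x a ha =>
    subst ha
    rw [descFree_gen, CategoryTheory.Functor.map_id]
    simp only [descPrefunctor]
    simp
    exact eqToHom_aux_id _ _ _
  | comp j x y z f g a b c ha hb hc =>
    subst ha; subst hb; subst hc
    rw [descFree_gen, CategoryTheory.Functor.map_comp, descFree_gen, descFree_gen]
    simp [descPrefunctor]
    exact eqToHom_aux_comp _ _ _ _ _ _ _ _ _ _ _
  | nat j j' α x y f a b ha hb ha' hb' =>
    subst ha; subst hb
    rw [descFree_gen, descFree_gen]
    have hw : ∀ (u v : ↑(F.obj j)) (g : u ⟶ v), (s.ι.app j).map g =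
        eqToHom (Functor.congr_obj (s.w α) u).symm ≫
          (s.ι.app j').map ((F.map α).map g) ≫ eqToHom (Functor.congr_obj (s.w α) v) := by
      intro u v g
      have := Functor.congr_hom (s.w α).symm g
      simpa using this
    simp only [descPrefunctor]
    rw [hw x y f]
    simp
    exact eqToHom_aux_nat _ _ _ _ _ _ _ _ _ _

/-- The descent functor out of the colimit groupoid. -/
noncomputable def descQ : ColimC F ⟶ s.pt :=
  (CategoryTheory.Quotient.lift (colimRel F) (descFree F s) (descFree_rel F s) :
    CategoryTheory.Quotient (colimRel F) ⥤ ↑s.pt)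

lemma descQ_obj (a : Ob F) : (descQ F s).obj (vtxQ F a) = vmap F s a := by
  show (descFree F s).obj ((Quiver.FreeGroupoid.of (Ob F)).obj a) = _
  exact congrFun (congrArg Prefunctor.obj (Quiver.FreeGroupoid.lift_spec (descPrefunctor F s))) a

lemma descQ_gen {a b : Ob F} (e : a ⟶ b) :
    (descQ F s).map (genQ F e) = eqToHom (descQ_obj F s a) ≫ (descPrefunctor F s).map e ≫
      eqToHom (descQ_obj F s b).symm := by
  show (CategoryTheory.Quotient.lift (colimRel F) (descFree F s) (descFree_rel F s)).map
    ((Quotient.functor (colimRel F)).map ((Quiver.FreeGroupoid.of (Ob F)).map e)) = _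
  rw [CategoryTheory.Quotient.lift_map_functor_map, descFree_gen]
  rfl

lemma descQ_fac (j : J) : leg F j ≫ descQ F s = s.ι.app j := by
  refine CategoryTheory.Functor.ext (fun x => descQ_obj F s (vtx F j x)) (fun x y f => ?_)
  show (descQ F s).map ((leg F j).map f) = _
  have : (leg F j).map f = genQ F (⟨j, x, y, f, rfl, rfl⟩ : vtx F j x ⟶ vtx F j y) := rfl
  rw [this]
  exact (descQ_gen F s _).trans (eqToHom_aux_fac _ _ _ _ _ _ _)

lemma descQ_uniq (m : ColimC F ⟶ s.pt) (hm : ∀ j, leg F j ≫ m = s.ι.app j) :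
    m = descQ F s := by
  refine CategoryTheory.Quotient.lift_unique _ _ _ _ ?_
  refine Quiver.FreeGroupoid.lift_unique (descPrefunctor F s) _ ?_
  refine prefunctor_ext' (fun a => ?_) (fun a b e => ?_)
  · induction a using Quot.ind with
    | _ p =>
      obtain ⟨j, x⟩ := p
      exact Functor.congr_obj (hm j) x
  · obtain ⟨j, x, y, f, ha, hb⟩ := e
    subst ha; subst hb
    show m.map (genQ F _) = _
    have h1 : genQ F (⟨j, x, y, f, rfl, rfl⟩ : vtx F j x ⟶ vtx F j y) = (leg F j).map f := rfl
    have h2 := Functor.congr_hom (hm j) f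
    simp only [comp_map'] at h2
    rw [h1]
    exact h2.trans (eqToHom_aux_fac _ _ _ _ _ _ _).symm

end Desc

/-- The colimit cocone is a colimit. -/
noncomputable def colimIsColimit : IsColimit (colimCocone F) where
  desc s := descQ F s
  fac s j := descQ_fac F s j
  uniq s m w := descQ_uniq F s m w

noncomputable instance : HasColimits Grpd.{u,u} where
  has_colimits_of_shape _ :=
    { has_colimit := fun F => HasColimit.mk ⟨colimCocone F, colimIsColimit F⟩ }

end Colims

/-- **The canonical model structure on `Grpd`**: with weak equivalences the fully faithful
essentially surjective functors, fibrations the isofibrations, and cofibrations the functors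
injective on objects, the category of small groupoids is a model category. -/
theorem grpd_isModelCategory :
    IsModelCategory Grpd.{u, u} weakEquiv fibration cofibration := by
  exact
    { hasLimits := inferInstance
      hasColimits := inferInstance
      weq_comp := weq_comp'
      weq_of_precomp := weq_of_precomp'
      weq_of_postcomp := weq_of_postcomp'
      weq_retract := weq_retract'
      fib_retract := fib_retract'
      cof_retract := cof_retract'
      lift_cof_trivFib := lift_cof_trivFib'
      lift_trivCof_fib := lift_trivCof_fib'
      fact_cof_trivFib := fact_cof_trivFib'
      fact_trivCof_fib := fact_trivCof_fib' }

end Stmt0
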